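/- arXiv:1711.09460 — 3 statements merged into one kernel-verified Lean document; each statement's English description precedes it below -/
import Mathlib

section
/- Let V ⊆ ℝ be a bounded interval of positive length and ω ⊆ V a measurable subset of positive Lebesgue measure. Then for every real polynomial p of degree at most k: sup_{t ∈ V} |p(t)| ≤ (4·|V|/|ω|)^k · sup_{t ∈ ω} |p(t)|, where |·| denotes Lebesgue measure. -/
open MeasureTheory Polynomial Set
open scoped Real

set_option maxHeartbeats 1000000

namespace RemezProof

noncomputable def Te (y : ℝ) (n : ℕ) : ℝ := (Polynomial.Chebyshev.T ℝ (n : ℤ)).eval y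

lemma Te_zero (y : ℝ) : Te y 0 = 1 := by simp [Te, Polynomial.Chebyshev.T_zero]

lemma Te_one (y : ℝ) : Te y 1 = y := by simp [Te, Polynomial.Chebyshev.T_one]

lemma Te_add_two (y : ℝ) (n : ℕ) : Te y (n + 2) = 2 * y * Te y (n + 1) - Te y n := by
  have h := Polynomial.Chebyshev.T_add_two ℝ (n : ℤ)
  simp only [Te]
  have h1 : ((n + 2 : ℕ) : ℤ) = (n : ℤ) + 2 := by push_cast; ring
  have h2 : ((n + 1 : ℕ) : ℤ) = (n : ℤ) + 1 := by push_cast; ring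
  rw [h1, h2, h]
  simp [mul_assoc]

lemma Te_mono (y : ℝ) (hy : 1 ≤ y) : ∀ n : ℕ, 1 ≤ Te y n ∧ Te y n ≤ Te y (n + 1) := by
  intro n
  induction n with
  | zero => refine ⟨le_of_eq (Te_zero y).symm, ?_⟩; rw [Te_zero, Te_one]; exact hy
  | succ m ih =>
    obtain ⟨h1, h2⟩ := ih
    have h3 : 1 ≤ Te y (m + 1) := le_trans h1 h2
    refine ⟨h3, ?_⟩
    rw [Te_add_two]
    nlinarith

lemma Te_le (y : ℝ) (hy : 1 ≤ y) (n : ℕ) : Te y n ≤ (2 * y) ^ n := by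
  induction n using Nat.strong_induction_on with
  | _ n ih =>
    match n with
    | 0 => rw [Te_zero]; simp
    | 1 => rw [Te_one]; nlinarith
    | (m + 2) =>
      rw [Te_add_two]
      have h1 := (Te_mono y hy m).1
      have h2 := ih (m + 1) (by omega)
      have h3 : (0:ℝ) < 2 * y := by linarith
      calc 2 * y * Te y (m + 1) - Te y m ≤ 2 * y * Te y (m + 1) := by linarith
        _ ≤ 2 * y * (2 * y) ^ (m + 1) := by nlinarith
        _ = (2 * y) ^ (m + 2) := by ring

lemma natDegree_T_le : ∀ n : ℕ, (Polynomial.Chebyshev.T ℝ (n : ℤ)).natDegree ≤ n := by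
  intro n
  induction n using Nat.strong_induction_on with
  | _ n ih =>
    match n with
    | 0 => simp [Polynomial.Chebyshev.T_zero]
    | 1 => simpa [Polynomial.Chebyshev.T_one] using Polynomial.natDegree_X_le
    | (m + 2) =>
      have h := Polynomial.Chebyshev.T_add_two ℝ (m : ℤ)
      have h1 : ((m + 2 : ℕ) : ℤ) = (m : ℤ) + 2 := by push_cast; ring
      rw [h1, h]
      refine le_trans (Polynomial.natDegree_sub_le _ _) ?_
      have hA : (2 * X * Polynomial.Chebyshev.T ℝ ((m : ℤ) + 1)).natDegree ≤ m + 2 := by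
        refine le_trans Polynomial.natDegree_mul_le ?_
        have hB : ((2 * X : ℝ[X])).natDegree ≤ 1 := by
          refine le_trans Polynomial.natDegree_mul_le ?_
          simp
        have hC : (Polynomial.Chebyshev.T ℝ ((m : ℤ) + 1)).natDegree ≤ m + 1 := by
          have := ih (m + 1) (by omega)
          have h2 : ((m + 1 : ℕ) : ℤ) = (m : ℤ) + 1 := by push_cast; ring
          rwa [h2] at this
        omega
      have hD := ih m (by omega)
      omega

noncomputable def chebNode (k i : ℕ) : ℝ := (1 - Real.cos (i * π / k)) / 2

lemma chebNode_mem (k i : ℕ) : 0 ≤ chebNode k i ∧ chebNode k i ≤ 1 := by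
  have h1 := Real.cos_le_one ((i : ℝ) * π / k)
  have h2 := Real.neg_one_le_cos ((i : ℝ) * π / k)
  constructor <;> (unfold chebNode; linarith)

lemma chebNode_lt (k : ℕ) (hk : 1 ≤ k) {i j : ℕ} (hij : i < j) (hjk : j ≤ k) :
    chebNode k i < chebNode k j := by
  have hkpos : (0:ℝ) < k := by exact_mod_cast hk
  have hπ := Real.pi_pos
  have hcos : Real.cos ((j : ℝ) * π / k) < Real.cos ((i : ℝ) * π / k) := by
    apply Real.cos_lt_cos_of_nonneg_of_le_pi
    · positivity
    · rw [div_le_iff₀ hkpos]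
      have : (j : ℝ) ≤ k := by exact_mod_cast hjk
      nlinarith
    · have : (i : ℝ) < j := by exact_mod_cast hij
      gcongr
  unfold chebNode; linarith

lemma chebNode_zero (k : ℕ) : chebNode k 0 = 0 := by
  simp [chebNode]

lemma chebNode_inj (k : ℕ) (hk : 1 ≤ k) :
    Set.InjOn (chebNode k) ↑(Finset.range (k + 1)) := by
  intro i hi j hj hij
  simp only [Finset.coe_range, Set.mem_Iio] at hi hj
  by_contra hne
  rcases Nat.lt_or_ge i j with h | h
  · exact absurd hij (ne_of_lt (chebNode_lt k hk h (by omega)))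
  · have : j < i := by omega
    exact absurd hij.symm (ne_of_lt (chebNode_lt k hk this (by omega)))

-- evaluation of the scaled Chebyshev polynomial at the nodes
lemma cheb_eval_node (k : ℕ) (hk : 1 ≤ k) (i : ℕ) (hik : i ≤ k) :
    ((Polynomial.Chebyshev.T ℝ (k : ℤ)).comp (C 2 * X - C 1)).eval (chebNode k i)
      = (-1 : ℝ) ^ (k + i) := by
  have hkpos : (0:ℝ) < k := by exact_mod_cast hk
  rw [Polynomial.eval_comp]
  have h1 : (C 2 * X - C 1 : ℝ[X]).eval (chebNode k i) = 2 * chebNode k i - 1 := by simp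
  rw [h1]
  have h2 : 2 * chebNode k i - 1 = Real.cos (π - (i : ℝ) * π / k) := by
    rw [Real.cos_pi_sub]; unfold chebNode; ring
  rw [h2, Polynomial.Chebyshev.T_real_cos]
  have h3 : (k : ℝ) * (π - (i : ℝ) * π / k) = (k : ℝ) * π - (i : ℝ) * π := by
    field_simp
  push_cast
  rw [h3]
  rw [Real.cos_nat_mul_pi_sub ((i : ℝ) * π) k]
  have h4 : Real.cos ((i : ℝ) * π) = (-1 : ℝ) ^ i := by
    have := Real.cos_nat_mul_pi_sub 0 i
    simpa using this
  rw [h4, pow_add]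

lemma cheb_sum (k : ℕ) (hk : 1 ≤ k) (R : ℝ) (hR : 1 ≤ R) :
    ∑ i ∈ Finset.range (k + 1), |(Lagrange.basis (Finset.range (k + 1)) (chebNode k) i).eval R|
      = ((Polynomial.Chebyshev.T ℝ (k : ℤ)).comp (C 2 * X - C 1)).eval R := by
  classical
  set s : Finset ℕ := Finset.range (k + 1) with hs
  set g : ℝ[X] := (Polynomial.Chebyshev.T ℝ (k : ℤ)).comp (C 2 * X - C 1) with hg
  have hinj := chebNode_inj k hk
  have hgdeg : g.degree < (s.card : WithBot ℕ) := by
    have h1 : g.natDegree ≤ k := by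
      refine le_trans Polynomial.natDegree_comp_le ?_
      have h2 : (C 2 * X - C 1 : ℝ[X]).natDegree ≤ 1 := by
        refine le_trans (Polynomial.natDegree_sub_le _ _) ?_
        have : (C 2 * X : ℝ[X]).natDegree ≤ 1 := by
          refine le_trans Polynomial.natDegree_mul_le ?_; simp
        simp only [Polynomial.natDegree_C]
        omega
      have h3 := natDegree_T_le k
      nlinarith
    have h2 : s.card = k + 1 := by rw [hs, Finset.card_range]
    rw [h2]
    refine lt_of_le_of_lt Polynomial.degree_le_natDegree ?_
    exact_mod_cast Nat.lt_succ_of_le h1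
  have hinterp : g = Lagrange.interpolate s (chebNode k) (fun i => (-1 : ℝ) ^ (k + i)) := by
    apply Lagrange.eq_interpolate_of_eval_eq _ hinj hgdeg
    intro i hi
    exact cheb_eval_node k hk i (by simp only [hs, Finset.mem_range] at hi; omega)
  have heval : g.eval R = ∑ i ∈ s, (-1 : ℝ) ^ (k + i) * (Lagrange.basis s (chebNode k) i).eval R := by
    conv_lhs => rw [hinterp]
    rw [Lagrange.interpolate_apply, Polynomial.eval_finset_sum]
    refine Finset.sum_congr rfl fun i _ => ?_
    rw [Polynomial.eval_mul, Polynomial.eval_C]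
  rw [heval]
  refine Finset.sum_congr rfl fun i hi => ?_
  have hik : i ≤ k := by rw [hs] at hi; simp at hi; omega
  -- the sign claim
  have hbasis : (Lagrange.basis s (chebNode k) i).eval R
      = ∏ j ∈ s.erase i, ((chebNode k i - chebNode k j)⁻¹ * (R - chebNode k j)) := by
    rw [Lagrange.basis, Polynomial.eval_prod]
    refine Finset.prod_congr rfl fun j _ => ?_
    simp [Lagrange.basisDivisor]
  set ε : ℕ → ℝ := fun j => if i < j then -1 else 1 with hε
  have hprodeps : ∏ j ∈ s.erase i, ε j = (-1 : ℝ) ^ (k + i) := by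
    rw [hε]
    rw [Finset.prod_ite _ _]
    rw [Finset.prod_const, Finset.prod_const, one_pow, mul_one]
    have hfil : (s.erase i).filter (fun j => i < j) = Finset.Ico (i + 1) (k + 1) := by
      ext j
      simp only [Finset.mem_filter, Finset.mem_erase, hs, Finset.mem_range, Finset.mem_Ico]
      omega
    rw [hfil, Nat.card_Ico]
    have h5 : k + i = (k + 1 - (i + 1)) + 2 * i := by omega
    rw [h5, pow_add, pow_mul]
    simp
  have hsign : 0 ≤ (-1 : ℝ) ^ (k + i) * (Lagrange.basis s (chebNode k) i).eval R := by
    rw [hbasis, ← hprodeps, ← Finset.prod_mul_distrib]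
    apply Finset.prod_nonneg
    intro j hj
    have hjk : j ≤ k := by
      have := Finset.mem_of_mem_erase hj
      rw [hs] at this; simp at this; omega
    have hji : j ≠ i := Finset.ne_of_mem_erase hj
    have hRj : 0 ≤ R - chebNode k j := by
      have := (chebNode_mem k j).2; linarith
    rcases Nat.lt_or_ge i j with h | h
    · have hlt : chebNode k i < chebNode k j := chebNode_lt k hk h hjk
      have hinv : (chebNode k i - chebNode k j)⁻¹ ≤ 0 := by
        apply inv_nonpos.mpr; linarith
      have : ε j = -1 := by rw [hε]; simp [h]
      rw [this]
      nlinarith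
    · have hji' : j < i := by omega
      have hlt : chebNode k j < chebNode k i := chebNode_lt k hk hji' hik
      have hinv : 0 ≤ (chebNode k i - chebNode k j)⁻¹ := by
        apply inv_nonneg.mpr; linarith
      have : ε j = 1 := by rw [hε]; simp; omega
      rw [this]
      nlinarith
  have habs1 : |(-1 : ℝ) ^ (k + i)| = 1 := by
    rw [abs_pow, abs_neg, abs_one, one_pow]
  have h6 : |(-1 : ℝ) ^ (k + i) * (Lagrange.basis s (chebNode k) i).eval R|
      = |(Lagrange.basis s (chebNode k) i).eval R| := by
    rw [abs_mul, habs1, one_mul]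
  rw [← h6]
  exact abs_of_nonneg hsign

lemma remez_core (a t : ℝ) (ω : Set ℝ) (hω : MeasurableSet ω) (hsub : ω ⊆ Set.Icc a t)
    (hpos : 0 < volume ω) (k : ℕ) (hk : 1 ≤ k) (p : ℝ[X]) (hdeg : p.natDegree ≤ k)
    (M : ℝ) (hM : ∀ s ∈ ω, |p.eval s| ≤ M) :
    |p.eval t| ≤ (4 * (t - a) / (volume ω).toReal - 2) ^ k * M := by
  classical
  have hne : ω.Nonempty := nonempty_of_measure_ne_zero hpos.ne'
  obtain ⟨w₀, hw₀⟩ := hne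
  have hat : a ≤ t := le_trans (hsub hw₀).1 (hsub hw₀).2
  have hIccfin : volume (Set.Icc a t) ≠ ⊤ := by
    rw [Real.volume_Icc]; exact ENNReal.ofReal_ne_top
  have hfin : volume ω ≠ ⊤ := ((measure_mono hsub).trans_lt (lt_top_iff_ne_top.mpr hIccfin)).ne
  set μ : ℝ := (volume ω).toReal with hμdef
  have hμpos : 0 < μ := ENNReal.toReal_pos hpos.ne' hfin
  have hμle : μ ≤ t - a := by
    have h1 : volume ω ≤ ENNReal.ofReal (t - a) := by
      rw [← Real.volume_Icc]; exact measure_mono hsub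
    calc μ ≤ (ENNReal.ofReal (t - a)).toReal := ENNReal.toReal_mono ENNReal.ofReal_ne_top h1
      _ = t - a := ENNReal.toReal_ofReal (by linarith)
  have hat' : a < t := by linarith
  -- the distribution function
  set F : ℝ → ℝ := fun y => (volume (ω ∩ Set.Iic y)).toReal with hFdef
  have hFfin : ∀ y, volume (ω ∩ Set.Iic y) ≠ ⊤ :=
    fun y => ((measure_mono Set.inter_subset_left).trans_lt (lt_top_iff_ne_top.mpr hfin)).ne
  have hFnn : ∀ y, 0 ≤ F y := fun y => ENNReal.toReal_nonneg
  have hFmono : Monotone F := by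
    intro y z hyz
    exact ENNReal.toReal_mono (hFfin z)
      (measure_mono (Set.inter_subset_inter_right _ (Set.Iic_subset_Iic.mpr hyz)))
  have hFsub : ∀ z y : ℝ, z ≤ y → F y ≤ F z + (volume (ω ∩ Set.Ioc z y)).toReal := by
    intro z y hzy
    have hss : ω ∩ Set.Iic y ⊆ (ω ∩ Set.Iic z) ∪ (ω ∩ Set.Ioc z y) := by
      rintro u ⟨hu1, hu2⟩
      rcases le_or_gt u z with h | h
      · exact Or.inl ⟨hu1, h⟩
      · exact Or.inr ⟨hu1, h, hu2⟩
    have hfin2 : volume (ω ∩ Set.Ioc z y) ≠ ⊤ :=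
      ((measure_mono Set.inter_subset_left).trans_lt (lt_top_iff_ne_top.mpr hfin)).ne
    calc F y ≤ (volume ((ω ∩ Set.Iic z) ∪ (ω ∩ Set.Ioc z y))).toReal := by
          apply ENNReal.toReal_mono
          · exact ((measure_union_le _ _).trans_lt
              (ENNReal.add_lt_top.mpr ⟨lt_top_iff_ne_top.mpr (hFfin z),
                lt_top_iff_ne_top.mpr hfin2⟩)).ne
          · exact measure_mono hss
      _ ≤ ((volume (ω ∩ Set.Iic z)) + volume (ω ∩ Set.Ioc z y)).toReal := by
          apply ENNReal.toReal_mono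
          · exact ENNReal.add_ne_top.mpr ⟨hFfin z, hfin2⟩
          · exact measure_union_le _ _
      _ = F z + (volume (ω ∩ Set.Ioc z y)).toReal := ENNReal.toReal_add (hFfin z) hfin2
  have hFlip : ∀ z y : ℝ, z ≤ y → F y ≤ F z + (y - z) := by
    intro z y hzy
    refine le_trans (hFsub z y hzy) ?_
    have h1 : volume (ω ∩ Set.Ioc z y) ≤ ENNReal.ofReal (y - z) := by
      rw [← Real.volume_Ioc]; exact measure_mono Set.inter_subset_right
    have h2 : (volume (ω ∩ Set.Ioc z y)).toReal ≤ y - z := by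
      calc (volume (ω ∩ Set.Ioc z y)).toReal ≤ (ENNReal.ofReal (y - z)).toReal :=
            ENNReal.toReal_mono ENNReal.ofReal_ne_top h1
        _ = y - z := ENNReal.toReal_ofReal (by linarith)
    linarith
  have hFcont : Continuous F := by
    have : LipschitzWith 1 F := by
      apply LipschitzWith.of_dist_le_mul
      intro y z
      rw [Real.dist_eq, Real.dist_eq]
      push_cast
      rw [one_mul]
      rcases le_total y z with h | h
      · have h1 := hFmono h
        have h2 := hFlip y z h
        rw [abs_of_nonpos (by linarith), abs_of_nonpos (by linarith)]
        linarith
      · have h1 := hFmono h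
        have h2 := hFlip z y h
        rw [abs_of_nonneg (by linarith), abs_of_nonneg (by linarith)]
        linarith
    exact this.continuous
  have hFt : F t = μ := by
    have : ω ∩ Set.Iic t = ω := Set.inter_eq_left.mpr (fun w hw => (hsub hw).2)
    rw [hFdef]; simp only [this]; exact hμdef.symm
  have hFub : ∀ y : ℝ, a ≤ y → F y ≤ y - a := by
    intro y hay
    have h1 : ω ∩ Set.Iic y ⊆ Set.Icc a y := fun u ⟨hu1, hu2⟩ => ⟨(hsub hu1).1, hu2⟩
    have h2 : volume (ω ∩ Set.Iic y) ≤ ENNReal.ofReal (y - a) := by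
      rw [← Real.volume_Icc]; exact measure_mono h1
    calc F y ≤ (ENNReal.ofReal (y - a)).toReal := ENNReal.toReal_mono ENNReal.ofReal_ne_top h2
      _ = y - a := ENNReal.toReal_ofReal (by linarith)
  -- node construction
  set c : ℕ → ℝ := chebNode k with hcdef
  have hc0 : c 0 = 0 := chebNode_zero k
  set x : ℕ → ℝ := fun i => if i = 0 then sInf (closure ω) else sInf {y : ℝ | μ * c i ≤ F y}
    with hxdef
  have hclsub : closure ω ⊆ Set.Icc a t := closure_minimal hsub isClosed_Icc
  have hclne : (closure ω).Nonempty := ⟨w₀, subset_closure hw₀⟩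
  have hclbdd : BddBelow (closure ω) := ⟨a, fun y hy => (hclsub hy).1⟩
  have hx0mem : x 0 ∈ closure ω := by
    rw [hxdef]; simp only [if_pos rfl]
    exact IsClosed.csInf_mem isClosed_closure hclne hclbdd
  -- facts for i between 1 and k
  have hxfacts : ∀ i, 1 ≤ i → i ≤ k →
      x i ∈ closure ω ∧ μ * c i ≤ F (x i) ∧ F (x i) ≤ μ * c i := by
    intro i hi1 hik
    have hcipos : 0 < c i := by
      rw [← hc0]; exact chebNode_lt k hk (by omega) hik
    have hci1 : c i ≤ 1 := (chebNode_mem k i).2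
    set S : Set ℝ := {y : ℝ | μ * c i ≤ F y} with hSdef
    have hSne : t ∈ S := by
      rw [hSdef]; simp only [Set.mem_setOf_eq, hFt]
      nlinarith
    have hSlb : ∀ y ∈ S, a ≤ y := by
      intro y hy
      by_contra hya
      push_neg at hya
      have hempty : ω ∩ Set.Iic y = ∅ := by
        ext u
        simp only [Set.mem_inter_iff, Set.mem_Iic, Set.mem_empty_iff_false, iff_false, not_and]
        intro hu
        linarith [(hsub hu).1]
      have : F y = 0 := by rw [hFdef]; simp only [hempty, measure_empty, ENNReal.toReal_zero]
      rw [hSdef] at hy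
      simp only [Set.mem_setOf_eq, this] at hy
      nlinarith
    have hSclosed : IsClosed S := IsClosed.preimage hFcont isClosed_Ici
    have hxi : x i = sInf S := by rw [hxdef]; simp only [if_neg (by omega : ¬ i = 0)]; rfl
    have hximem : x i ∈ S := by
      rw [hxi]; exact IsClosed.csInf_mem hSclosed ⟨t, hSne⟩ ⟨a, hSlb⟩
    have hge : μ * c i ≤ F (x i) := hximem
    have hnotS : ∀ ε : ℝ, 0 < ε → F (x i - ε) < μ * c i := by
      intro ε hε
      by_contra hcon
      push_neg at hcon
      have : x i ≤ x i - ε := by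
        conv_lhs => rw [hxi]
        exact csInf_le ⟨a, hSlb⟩ hcon
      linarith
    have hle : F (x i) ≤ μ * c i := by
      apply le_of_forall_pos_le_add
      intro ε hε
      have h1 := hFlip (x i - ε) (x i) (by linarith)
      have h2 := hnotS ε hε
      linarith
    have hcl : x i ∈ closure ω := by
      rw [Metric.mem_closure_iff]
      intro ε hε
      have h1 := hnotS ε hε
      have h2 := hFsub (x i - ε) (x i) (by linarith)
      have h3 : 0 < (volume (ω ∩ Set.Ioc (x i - ε) (x i))).toReal := by linarith
      have h4 : volume (ω ∩ Set.Ioc (x i - ε) (x i)) ≠ 0 := by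
        intro hcon
        rw [hcon] at h3
        simp at h3
      obtain ⟨u, hu1, hu2, hu3⟩ := nonempty_of_measure_ne_zero h4
      refine ⟨u, hu1, ?_⟩
      rw [Real.dist_eq, abs_of_nonneg (by linarith)]
      linarith
    exact ⟨hcl, hge, hle⟩
  have hcl : ∀ i, i ≤ k → x i ∈ closure ω := by
    intro i hik
    rcases Nat.eq_zero_or_pos i with h | h
    · rw [h]; exact hx0mem
    · exact (hxfacts i h hik).1
  have hge : ∀ i, i ≤ k → μ * c i ≤ F (x i) := by
    intro i hik
    rcases Nat.eq_zero_or_pos i with h | h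
    · rw [h, hc0, mul_zero]; exact hFnn _
    · exact (hxfacts i h hik).2.1
  have hle : ∀ i, i ≤ k → F (x i) ≤ μ * c i := by
    intro i hik
    rcases Nat.eq_zero_or_pos i with h | h
    · rw [h, hc0, mul_zero]
      have hsing : ω ∩ Set.Iic (x 0) ⊆ {x 0} := by
        rintro u ⟨hu1, hu2⟩
        have : x 0 ≤ u := by
          rw [hxdef]; simp only [if_pos rfl]
          exact csInf_le hclbdd (subset_closure hu1)
        simp only [Set.mem_singleton_iff]
        exact le_antisymm hu2 this
      have h2 : volume (ω ∩ Set.Iic (x 0)) ≤ volume ({x 0} : Set ℝ) := measure_mono hsing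
      rw [Real.volume_singleton] at h2
      have h3 : volume (ω ∩ Set.Iic (x 0)) = 0 := le_antisymm h2 zero_le
      show (volume (ω ∩ Set.Iic (x 0))).toReal ≤ 0
      rw [h3]
      simp
    · exact (hxfacts i h hik).2.2
  have hmem : ∀ i, i ≤ k → x i ∈ Set.Icc a t := fun i hik => hclsub (hcl i hik)
  have hgap : ∀ j i, j < i → i ≤ k → μ * (c i - c j) ≤ x i - x j := by
    intro j i hji hik
    have hjk : j ≤ k := by omega
    have hcij : c j < c i := chebNode_lt k hk hji hik
    have horder : x j ≤ x i := by
      by_contra hcon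
      push_neg at hcon
      have h1 : F (x i) ≤ F (x j) := hFmono hcon.le
      have h2 := hge i hik
      have h3 := hle j hjk
      nlinarith
    have h4 := hFlip (x j) (x i) horder
    have h5 := hge i hik
    have h6 := hle j hjk
    nlinarith
  have habsgap : ∀ i, i ≤ k → ∀ j, j ≤ k → i ≠ j → μ * |c i - c j| ≤ |x i - x j| := by
    intro i hik j hjk hij
    rcases Nat.lt_or_ge i j with h | h
    · have h1 := hgap i j h hjk
      have h2 : c i < c j := chebNode_lt k hk h hjk
      rw [abs_of_neg (by linarith), abs_of_nonpos (by nlinarith)]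
      linarith
    · have h' : j < i := by omega
      have h1 := hgap j i h' hik
      have h2 : c j < c i := chebNode_lt k hk h' hik
      rw [abs_of_pos (by linarith), abs_of_nonneg (by nlinarith)]
      linarith
  -- Lagrange interpolation
  set s : Finset ℕ := Finset.range (k + 1) with hsdef
  have hinj : Set.InjOn x ↑s := by
    intro i hi j hj hxij
    simp only [hsdef, Finset.coe_range, Set.mem_Iio] at hi hj
    by_contra hne
    have := habsgap i (by omega) j (by omega) hne
    rw [hxij] at this
    simp only [sub_self, abs_zero] at this
    have hcij : c i ≠ c j := by
      rcases Nat.lt_or_ge i j with h | h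
      · exact (chebNode_lt k hk h (by omega)).ne
      · exact (chebNode_lt k hk (by omega : j < i) (by omega)).ne'
    have : 0 < μ * |c i - c j| := by
      apply mul_pos hμpos
      rw [abs_pos]
      exact sub_ne_zero.mpr hcij
    linarith
  have hpd : p.degree < (s.card : WithBot ℕ) := by
    have h1 : s.card = k + 1 := by rw [hsdef, Finset.card_range]
    rw [h1]
    refine lt_of_le_of_lt Polynomial.degree_le_natDegree ?_
    exact_mod_cast Nat.lt_succ_of_le hdeg
  have hinterp : p = Lagrange.interpolate s x (fun i => p.eval (x i)) :=
    Lagrange.eq_interpolate hinj hpd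
  have heval : p.eval t = ∑ i ∈ s, p.eval (x i) * (Lagrange.basis s x i).eval t := by
    conv_lhs => rw [hinterp]
    rw [Lagrange.interpolate_apply, Polynomial.eval_finset_sum]
    refine Finset.sum_congr rfl fun i _ => ?_
    rw [Polynomial.eval_mul, Polynomial.eval_C]
  -- bound |p (x i)| via closure
  have hMnn : 0 ≤ M := le_trans (abs_nonneg _) (hM w₀ hw₀)
  have hMcl : ∀ i, i ≤ k → |p.eval (x i)| ≤ M := by
    intro i hik
    have hclosed : IsClosed {y : ℝ | |p.eval y| ≤ M} := by
      have hcont : Continuous fun y : ℝ => |p.eval y| := (Polynomial.continuous p).abs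
      exact IsClosed.preimage hcont isClosed_Iic
    exact closure_minimal hM hclosed (hcl i hik)
  set R : ℝ := (t - a) / μ with hRdef
  have hR1 : 1 ≤ R := by
    rw [hRdef, le_div_iff₀ hμpos]
    linarith
  -- factorwise comparison
  have hclaim1 : ∀ i ∈ s, |(Lagrange.basis s x i).eval t| ≤ |(Lagrange.basis s (chebNode k) i).eval R| := by
    intro i hi
    have hik : i ≤ k := by simp only [hsdef, Finset.mem_range] at hi; omega
    rw [Lagrange.basis, Lagrange.basis, Polynomial.eval_prod, Polynomial.eval_prod,
      Finset.abs_prod, Finset.abs_prod]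
    apply Finset.prod_le_prod
    · intro j _; exact abs_nonneg _
    · intro j hj
      have hjk : j ≤ k := by
        have := Finset.mem_of_mem_erase hj
        simp only [hsdef, Finset.mem_range] at this; omega
      have hji : j ≠ i := Finset.ne_of_mem_erase hj
      have heq1 : ((Lagrange.basisDivisor (x i) (x j)).eval t) = (x i - x j)⁻¹ * (t - x j) := by
        simp [Lagrange.basisDivisor]
      have heq2 : ((Lagrange.basisDivisor (chebNode k i) (chebNode k j)).eval R)
          = (chebNode k i - chebNode k j)⁻¹ * (R - chebNode k j) := by
        simp [Lagrange.basisDivisor]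
      rw [heq1, heq2, abs_mul, abs_mul, abs_inv, abs_inv]
      rw [inv_mul_eq_div, inv_mul_eq_div]
      have hnum : |t - x j| ≤ μ * |R - chebNode k j| := by
        have hxj := hmem j hjk
        have h1 : |t - x j| = t - x j := abs_of_nonneg (by linarith [hxj.2])
        have h2 : μ * chebNode k j ≤ x j - a := by
          calc μ * chebNode k j ≤ F (x j) := hge j hjk
            _ ≤ x j - a := hFub (x j) hxj.1
        have h3 : chebNode k j ≤ R := le_trans (chebNode_mem k j).2 hR1
        have h4 : |R - chebNode k j| = R - chebNode k j := abs_of_nonneg (by linarith)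
        rw [h1, h4]
        have h5 : μ * R = t - a := by rw [hRdef]; field_simp
        nlinarith
      have hden : μ * |chebNode k i - chebNode k j| ≤ |x i - x j| :=
        habsgap i hik j hjk (by omega)
      have hdenpos : 0 < μ * |chebNode k i - chebNode k j| := by
        apply mul_pos hμpos
        rw [abs_pos, sub_ne_zero]
        rcases Nat.lt_or_ge i j with h | h
        · exact (chebNode_lt k hk h hjk).ne
        · exact (chebNode_lt k hk (by omega : j < i) hik).ne'
      calc |t - x j| / |x i - x j| ≤ (μ * |R - chebNode k j|) / (μ * |chebNode k i - chebNode k j|) := by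
            exact div_le_div₀ (by positivity) hnum hdenpos hden
        _ = |R - chebNode k j| / |chebNode k i - chebNode k j| := by
            rw [mul_div_mul_left _ _ (ne_of_gt hμpos)]
  have hμne : μ ≠ 0 := ne_of_gt hμpos
  calc |p.eval t| = |∑ i ∈ s, p.eval (x i) * (Lagrange.basis s x i).eval t| := by rw [heval]
    _ ≤ ∑ i ∈ s, |p.eval (x i) * (Lagrange.basis s x i).eval t| :=
        Finset.abs_sum_le_sum_abs _ _
    _ ≤ ∑ i ∈ s, M * |(Lagrange.basis s (chebNode k) i).eval R| := by
        apply Finset.sum_le_sum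
        intro i hi
        rw [abs_mul]
        have hik : i ≤ k := by simp only [hsdef, Finset.mem_range] at hi; omega
        exact mul_le_mul (hMcl i hik) (hclaim1 i hi) (abs_nonneg _) hMnn
    _ = M * ∑ i ∈ s, |(Lagrange.basis s (chebNode k) i).eval R| := by rw [Finset.mul_sum]
    _ = M * ((Polynomial.Chebyshev.T ℝ (k : ℤ)).comp (C 2 * X - C 1)).eval R := by
        rw [hsdef, cheb_sum k hk R hR1]
    _ ≤ M * (2 * (2 * R - 1)) ^ k := by
        apply mul_le_mul_of_nonneg_left _ hMnn
        have h1 : ((Polynomial.Chebyshev.T ℝ (k : ℤ)).comp (C 2 * X - C 1)).eval R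
            = Te (2 * R - 1) k := by
          rw [Polynomial.eval_comp]
          simp [Te]
        rw [h1]
        exact Te_le (2 * R - 1) (by linarith) k
    _ = (4 * (t - a) / μ - 2) ^ k * M := by
        rw [mul_comm]
        congr 1
        rw [hRdef]
        field_simp
        ring

end RemezProof

open RemezProof in
/-- Brudnyi–Ganzburg (Remez-type) inequality on an interval. -/
theorem stmt_3 (a b : ℝ) (hab : a < b) (ω : Set ℝ) (hω : MeasurableSet ω)
    (hsub : ω ⊆ Set.Icc a b) (hpos : 0 < volume ω) (k : ℕ)
    (p : Polynomial ℝ) (hdeg : p.natDegree ≤ k) :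
    ∀ t ∈ Set.Icc a b,
      |p.eval t| ≤ (4 * (b - a) / (volume ω).toReal) ^ k *
        sSup ((fun s => |p.eval s|) '' ω) := by
  intro t ht
  classical
  have hne : ω.Nonempty := MeasureTheory.nonempty_of_measure_ne_zero hpos.ne'
  obtain ⟨w₀, hw₀⟩ := hne
  set M : ℝ := sSup ((fun s => |p.eval s|) '' ω) with hMdef
  have hbdd : BddAbove ((fun s => |p.eval s|) '' ω) := by
    have h1 : BddAbove ((fun s => |p.eval s|) '' Set.Icc a b) :=
      (isCompact_Icc.image_of_continuousOn ((p.continuous.abs).continuousOn)).bddAbove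
    exact h1.mono (Set.image_mono hsub)
  have hM : ∀ s ∈ ω, |p.eval s| ≤ M := fun s hs => le_csSup hbdd ⟨s, hs, rfl⟩
  have hMnn : 0 ≤ M := le_trans (abs_nonneg _) (hM w₀ hw₀)
  have hfin : volume ω ≠ ⊤ := by
    refine ((measure_mono hsub).trans_lt ?_).ne
    rw [Real.volume_Icc]
    exact ENNReal.ofReal_lt_top
  set μ : ℝ := (volume ω).toReal with hμdef
  have hμpos : 0 < μ := ENNReal.toReal_pos hpos.ne' hfin
  rcases Nat.eq_zero_or_pos k with hk0 | hk1
  · -- constant polynomial case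
    subst hk0
    rw [pow_zero, one_mul]
    have := Polynomial.eq_C_of_natDegree_le_zero hdeg
    rw [this, Polynomial.eval_C]
    have h2 := hM w₀ hw₀
    rw [this, Polynomial.eval_C] at h2
    exact h2
  · -- main case: split at t
    set m₁ : ℝ := (volume (ω ∩ Set.Iic t)).toReal with hm₁
    set m₂ : ℝ := (volume (ω ∩ Set.Ici t)).toReal with hm₂
    have hfin₁ : volume (ω ∩ Set.Iic t) ≠ ⊤ :=
      ((measure_mono Set.inter_subset_left).trans_lt (lt_top_iff_ne_top.mpr hfin)).ne
    have hfin₂ : volume (ω ∩ Set.Ici t) ≠ ⊤ :=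
      ((measure_mono Set.inter_subset_left).trans_lt (lt_top_iff_ne_top.mpr hfin)).ne
    have hm₁nn : 0 ≤ m₁ := ENNReal.toReal_nonneg
    have hm₂nn : 0 ≤ m₂ := ENNReal.toReal_nonneg
    have hsum : μ ≤ m₁ + m₂ := by
      have h1 : ω ⊆ (ω ∩ Set.Iic t) ∪ (ω ∩ Set.Ici t) := by
        intro u hu
        rcases le_total u t with h | h
        · exact Or.inl ⟨hu, h⟩
        · exact Or.inr ⟨hu, h⟩
      calc μ ≤ (volume ((ω ∩ Set.Iic t) ∪ (ω ∩ Set.Ici t))).toReal := by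
            apply ENNReal.toReal_mono
            · exact ((measure_union_le _ _).trans_lt
                (ENNReal.add_lt_top.mpr ⟨lt_top_iff_ne_top.mpr hfin₁,
                  lt_top_iff_ne_top.mpr hfin₂⟩)).ne
            · exact measure_mono h1
        _ ≤ (volume (ω ∩ Set.Iic t) + volume (ω ∩ Set.Ici t)).toReal := by
            apply ENNReal.toReal_mono
            · exact ENNReal.add_ne_top.mpr ⟨hfin₁, hfin₂⟩
            · exact measure_union_le _ _
        _ = m₁ + m₂ := ENNReal.toReal_add hfin₁ hfin₂
    set A : ℝ := 4 * (b - a) / μ with hAdef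
    have hAμ : A * μ = 4 * (b - a) := by rw [hAdef]; field_simp
    have hApos : 0 < A := by
      rw [hAdef]
      have : 0 < b - a := by linarith
      positivity
    -- choose a good side
    have hchoice : (0 < m₁ ∧ 4 * (t - a) ≤ (A + 2) * m₁) ∨
        (0 < m₂ ∧ 4 * (b - t) ≤ (A + 2) * m₂) := by
      by_contra hcon
      push_neg at hcon
      obtain ⟨h1, h2⟩ := hcon
      rcases le_or_gt m₁ 0 with hm1 | hm1
      · have hm1' : m₁ = 0 := le_antisymm hm1 hm₁nn
        have hμm2 : μ ≤ m₂ := by linarith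
        have hm2pos : 0 < m₂ := lt_of_lt_of_le hμpos hμm2
        have h3 := h2 hm2pos
        have h4 : A * μ ≤ A * m₂ := by nlinarith
        have h5 : b - t ≤ b - a := by linarith [ht.1]
        nlinarith
      · have h3 := h1 hm1
        rcases le_or_gt m₂ 0 with hm2 | hm2
        · have hm2' : m₂ = 0 := le_antisymm hm2 hm₂nn
          have hμm1 : μ ≤ m₁ := by linarith
          have h4 : A * μ ≤ A * m₁ := by nlinarith
          have h5 : t - a ≤ b - a := by linarith [ht.2]
          nlinarith
        · have h4 := h2 hm2
          have h5 : A * μ ≤ A * (m₁ + m₂) := by nlinarith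
          nlinarith
    rcases hchoice with ⟨hpos₁, hineq₁⟩ | ⟨hpos₂, hineq₂⟩
    · -- left side
      have hvol₁ : 0 < volume (ω ∩ Set.Iic t) := by
        rcases (show (0:ENNReal) ≤ volume (ω ∩ Set.Iic t) from zero_le).lt_or_eq with h | h
        · exact h
        · exfalso; rw [hm₁, ← h] at hpos₁; simp at hpos₁
      have hsub₁ : ω ∩ Set.Iic t ⊆ Set.Icc a t :=
        fun u ⟨hu1, hu2⟩ => ⟨(hsub hu1).1, hu2⟩
      have hcore := remez_core a t (ω ∩ Set.Iic t) (hω.inter measurableSet_Iic) hsub₁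
        hvol₁ k hk1 p hdeg M (fun s hs => hM s hs.1)
      rw [← hm₁] at hcore
      refine le_trans hcore ?_
      apply mul_le_mul_of_nonneg_right _ hMnn
      have hm₁le : m₁ ≤ t - a := by
        have h1 : volume (ω ∩ Set.Iic t) ≤ ENNReal.ofReal (t - a) := by
          rw [← Real.volume_Icc]; exact measure_mono hsub₁
        calc m₁ ≤ (ENNReal.ofReal (t - a)).toReal :=
              ENNReal.toReal_mono ENNReal.ofReal_ne_top h1
          _ = t - a := ENNReal.toReal_ofReal (by linarith [ht.1])
      have hbase1 : (2:ℝ) ≤ 4 * (t - a) / m₁ := by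
        rw [le_div_iff₀ hpos₁]
        nlinarith
      have hbase2 : 4 * (t - a) / m₁ - 2 ≤ A := by
        have h := (div_le_iff₀ hpos₁).mpr hineq₁
        linarith
      exact pow_le_pow_left₀ (by linarith) hbase2 k
    · -- right side, by reflection
      set q : ℝ[X] := p.comp (-X) with hqdef
      have hqdeg : q.natDegree ≤ k := by
        rw [hqdef, Polynomial.natDegree_comp, Polynomial.natDegree_neg, Polynomial.natDegree_X,
          mul_one]
        exact hdeg
      have hqeval : ∀ y : ℝ, q.eval y = p.eval (-y) := by
        intro y
        rw [hqdef, Polynomial.eval_comp]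
        simp
      set ω' : Set ℝ := -(ω ∩ Set.Ici t) with hω'def
      have hmeas' : MeasurableSet ω' := (hω.inter measurableSet_Ici).neg
      have hvol' : volume ω' = volume (ω ∩ Set.Ici t) := by
        rw [hω'def]
        exact Measure.measure_neg volume _
      have hsub' : ω' ⊆ Set.Icc (-b) (-t) := by
        intro y hy
        rw [hω'def, Set.mem_neg] at hy
        obtain ⟨h1, h2⟩ := hy
        constructor
        · linarith [(hsub h1).2]
        · simp only [Set.mem_Ici] at h2; linarith
      have hvolpos' : 0 < volume ω' := by
        rw [hvol']
        rcases (show (0:ENNReal) ≤ volume (ω ∩ Set.Ici t) from zero_le).lt_or_eq with h | h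
        · exact h
        · exfalso; rw [hm₂, ← h] at hpos₂; simp at hpos₂
      have hM' : ∀ s ∈ ω', |q.eval s| ≤ M := by
        intro y hy
        rw [hω'def, Set.mem_neg] at hy
        rw [hqeval]
        exact hM _ hy.1
      have hcore := remez_core (-b) (-t) ω' hmeas' hsub' hvolpos' k hk1 q hqdeg M hM'
      rw [hvol', ← hm₂, hqeval, neg_neg] at hcore
      have hrw : -t - -b = b - t := by ring
      rw [hrw] at hcore
      refine le_trans hcore ?_
      apply mul_le_mul_of_nonneg_right _ hMnn
      have hsub₂ : ω ∩ Set.Ici t ⊆ Set.Icc t b :=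
        fun u ⟨hu1, hu2⟩ => ⟨hu2, (hsub hu1).2⟩
      have hm₂le : m₂ ≤ b - t := by
        have h1 : volume (ω ∩ Set.Ici t) ≤ ENNReal.ofReal (b - t) := by
          rw [← Real.volume_Icc]; exact measure_mono hsub₂
        calc m₂ ≤ (ENNReal.ofReal (b - t)).toReal :=
              ENNReal.toReal_mono ENNReal.ofReal_ne_top h1
          _ = b - t := ENNReal.toReal_ofReal (by linarith [ht.2])
      have hbase1 : (2:ℝ) ≤ 4 * (b - t) / m₂ := by
        rw [le_div_iff₀ hpos₂]
        nlinarith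
      have hbase2 : 4 * (b - t) / m₂ - 2 ≤ A := by
        have h := (div_le_iff₀ hpos₂).mpr hineq₂
        linarith
      exact pow_le_pow_left₀ (by linarith) hbase2 k
end

section
/- Let f : X → X be a homeomorphism of a compact metric space such that for some ε > 0, there is N₀ with the property that for every t > 0, X can be covered by N₀ Bowen balls B_f^t(x_i, ε/2). Then there exist points x_1,…,x_{N₀} ∈ X such that the sets B_f^∞(x_i, ε) := ⋂_{t>0} closure(B_f^t(x_i, ε)) cover X. -/
/-- If for every time `t` the space is covered by `N₀` Bowen balls of radius `ε/2`,
then some fixed `N₀`-tuple of infinite (closed) Bowen balls of radius `ε` covers `X`. -/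
theorem stmt_9 (X : Type*) [MetricSpace X] [CompactSpace X] (f : X ≃ₜ X)
    (ε : ℝ) (hε : 0 < ε) (N₀ : ℕ)
    (hcov : ∀ t : ℕ, ∃ x : Fin N₀ → X, ∀ y : X, ∃ i : Fin N₀,
      ∀ s ≤ t, dist ((f : X → X)^[s] (x i)) ((f : X → X)^[s] y) < ε / 2) :
    ∃ x : Fin N₀ → X, ∀ y : X, ∃ i : Fin N₀,
      y ∈ ⋂ t : ℕ, closure {z : X |
        ∀ s ≤ t, dist ((f : X → X)^[s] (x i)) ((f : X → X)^[s] z) < ε} := by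
  set C : ℕ → Set (Fin N₀ → X) := fun t =>
    {x | ∀ y : X, ∃ i : Fin N₀,
      ∀ s ≤ t, dist ((f : X → X)^[s] (x i)) ((f : X → X)^[s] y) ≤ ε / 2} with hC
  have hCne : ∀ t, (C t).Nonempty := by
    intro t
    obtain ⟨x, hx⟩ := hcov t
    exact ⟨x, fun y => (hx y).imp fun i hi s hs => (hi s hs).le⟩
  have hCcl : ∀ t, IsClosed (C t) := by
    intro t
    have : C t = ⋂ y : X, ⋃ i : Fin N₀, ⋂ s ∈ Set.Iic t,
        {x : Fin N₀ → X | dist ((f : X → X)^[s] (x i)) ((f : X → X)^[s] y) ≤ ε / 2} := by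
      ext x
      simp [hC, Set.mem_iInter, Set.mem_iUnion, Set.mem_Iic]
    rw [this]
    refine isClosed_iInter fun y => (isClosed_iUnion_of_finite fun i =>
      isClosed_biInter fun s _ => ?_)
    exact isClosed_le (((f.continuous.iterate s).comp (continuous_apply i)).dist
      continuous_const) continuous_const
  have hmono : ∀ t, C (t + 1) ⊆ C t := by
    intro t x hx y
    obtain ⟨i, hi⟩ := hx y
    exact ⟨i, fun s hs => hi s (hs.trans (Nat.le_succ t))⟩
  obtain ⟨x, hx⟩ := IsCompact.nonempty_iInter_of_sequence_nonempty_isCompact_isClosed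
    C hmono hCne ((hCcl 0).isCompact) hCcl
  have hxC : ∀ t, x ∈ C t := fun t => Set.mem_iInter.1 hx t
  refine ⟨x, fun y => ?_⟩
  have key : ∃ i : Fin N₀, ∀ t, ∀ s ≤ t,
      dist ((f : X → X)^[s] (x i)) ((f : X → X)^[s] y) ≤ ε / 2 := by
    by_contra h
    push_neg at h
    choose T S hS hd using h
    set M := Finset.univ.sup T with hM
    obtain ⟨i, hi⟩ := hxC M y
    exact absurd (hi (S i) ((hS i).trans (Finset.le_sup (Finset.mem_univ i)))) (hd i).not_ge
  obtain ⟨i, hi⟩ := key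
  refine ⟨i, Set.mem_iInter.2 fun t => subset_closure fun s hs => ?_⟩
  have := hi t s hs
  linarith
end

section
/- Let f : X → X be a transitive homeomorphism of a compact metric space such that the family {f^n : n ∈ ℤ} is uniformly equicontinuous. Then f is topologically conjugate to a translation (rotation) on a compact abelian group. -/
open Filter Topology Set

/-- A topological conjugacy from `(X, f)` to a translation (rotation) on a
compact abelian topological group. -/
structure RotationConjugacy (X : Type*) [TopologicalSpace X] (f : X → X) where
  G : Type*
  [tG : TopologicalSpace G]
  [gG : CommGroup G]
  [topG : IsTopologicalGroup G]
  [compG : CompactSpace G]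
  g : G
  h : X ≃ₜ G
  conj : ∀ x : X, h (f x) = g * h x

set_option maxHeartbeats 1000000

/-- A transitive, uniformly equicontinuous homeomorphism of a compact metric space
is topologically conjugate to a translation on a compact abelian group. -/
theorem stmt_10 (X : Type*) [MetricSpace X] [CompactSpace X] (f : X ≃ₜ X)
    (htrans : ∃ x₀ : X, Dense (Set.range fun n : ℤ => (f.toEquiv ^ n) x₀))
    (hequi : ∀ ε > (0:ℝ), ∃ δ > (0:ℝ), ∀ x y : X, dist x y < δ →
      ∀ n : ℤ, dist ((f.toEquiv ^ n) x) ((f.toEquiv ^ n) y) < ε) :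
    Nonempty (RotationConjugacy X f) := by
  classical
  obtain ⟨x₀, hx₀⟩ := htrans
  set F : ℤ → X → X := fun n x => (f.toEquiv ^ n) x with hF
  -- basic algebra of the family F
  have hFadd : ∀ n m : ℤ, F (n + m) = F n ∘ F m := by
    intro n m
    funext x
    simp only [F, zpow_add, Equiv.Perm.mul_apply, Function.comp_apply]
  have hF0 : F 0 = id := by
    funext x; simp [F]
  have hF1 : F 1 = ⇑f := by
    funext x; simp [F]
  have hFneg1 : F (-1) = ⇑f.symm := by
    funext x; simp only [F, zpow_neg, zpow_one]; rfl
  have hcont : ∀ n : ℤ, Continuous (F n) := by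
    intro n
    induction n using Int.induction_on with
    | zero => rw [hF0]; exact continuous_id
    | succ k ih =>
      have : F (k + 1) = F k ∘ F 1 := hFadd k 1
      rw [this, hF1]; exact ih.comp f.continuous
    | pred k ih =>
      have : F (-k - 1) = F (-k) ∘ F (-1) := by
        rw [← hFadd]; ring_nf
      rw [this, hFneg1]; exact ih.comp f.symm.continuous
  -- the set A and its closure T in the product topology
  set A : Set (X → X) := Set.range F with hA
  set T : Set (X → X) := closure A with hT
  have hAe : A.Equicontinuous := by
    intro x₁
    rw [Metric.equicontinuousAt_iff]
    intro ε hε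
    obtain ⟨δ, hδ, hd⟩ := hequi ε hε
    refine ⟨δ, hδ, fun x hx i => ?_⟩
    obtain ⟨n, hn⟩ := i.2
    have := hd x₁ x (by rwa [dist_comm] at hx) n
    simpa [← hn, F] using this
  have hTe : T.Equicontinuous := hAe.closure
  have hTcont : ∀ g ∈ T, Continuous g := fun g hg => hTe.continuous_of_mem hg
  have hmemF : ∀ n : ℤ, F n ∈ T := fun n => subset_closure ⟨n, rfl⟩
  have hTcompact : IsCompact T := isClosed_closure.isCompact
  -- the group G
  set G := {g : X → X // g ∈ T} with hG
  haveI : CompactSpace G := isCompact_iff_compactSpace.mp hTcompact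
  -- ultrafilter approximations
  have hkey : ∀ g ∈ T, ∃ v : Ultrafilter ℤ, Tendsto F (↑v) (𝓝 g) := by
    intro g hg
    obtain ⟨u, hAu, hu⟩ := mem_closure_iff_ultrafilter.mp hg
    set r : (X → X) → ℤ := fun a => if h : ∃ n, F n = a then h.choose else 0 with hr
    refine ⟨u.map r, ?_⟩
    have heq : F ∘ r =ᶠ[↑u] id := by
      filter_upwards [hAu] with a ha
      have h' : ∃ n, F n = a := ha
      simp only [Function.comp_apply, r, dif_pos h', id_eq]
      exact h'.choose_spec
    show Filter.map F (Filter.map r ↑u) ≤ 𝓝 g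
    rw [Filter.map_map, Filter.map_congr heq, Filter.map_id]
    exact hu
  -- joint continuity of evaluation on T × X
  have hjoint : Continuous fun p : G × X => (p.1 : X → X) p.2 := by
    rw [continuous_iff_continuousAt]
    rintro ⟨g₀, y₀⟩
    rw [ContinuousAt, Metric.tendsto_nhds]
    intro ε hε
    have h1 : ∀ᶠ y in 𝓝 y₀, ∀ g : T, dist ((g : X → X) y₀) ((g : X → X) y) < ε / 2 :=
      Metric.equicontinuousAt_iff_right.mp (hTe y₀) (ε / 2) (half_pos hε)
    have h2 : ∀ᶠ g : G in 𝓝 g₀, dist ((g : X → X) y₀) ((g₀ : X → X) y₀) < ε / 2 := by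
      have hc : Continuous fun g : G => (g : X → X) y₀ :=
        (continuous_apply y₀).comp continuous_subtype_val
      have := hc.continuousAt (x := g₀)
      rw [ContinuousAt, Metric.tendsto_nhds] at this
      exact this (ε / 2) (half_pos hε)
    have hnp : 𝓝 (g₀, y₀) = 𝓝 g₀ ×ˢ 𝓝 y₀ := nhds_prod_eq
    rw [hnp, eventually_prod_iff]
    refine ⟨_, h2, _, h1, fun {g} hg {y} hy => ?_⟩
    calc dist ((g : X → X) y) ((g₀ : X → X) y₀)
        ≤ dist ((g : X → X) y) ((g : X → X) y₀) + dist ((g : X → X) y₀) ((g₀ : X → X) y₀) :=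
          dist_triangle _ _ _
      _ < ε / 2 + ε / 2 := by
          refine add_lt_add ?_ hg
          rw [dist_comm]; exact hy g
      _ = ε := add_halves ε
  -- continuity of composition
  have hcompc : Continuous fun p : G × G => (p.1 : X → X) ∘ (p.2 : X → X) := by
    rw [continuous_pi_iff]
    intro x
    exact hjoint.comp (continuous_fst.prodMk
      ((continuous_apply x).comp (continuous_subtype_val.comp continuous_snd)))
  -- tendsto lemmas into the subtype
  set F' : ℤ → G := fun n => ⟨F n, hmemF n⟩ with hF'
  have hFG : ∀ {ι : Type} {l : Filter ι} {s : ι → ℤ} {g : G},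
      Tendsto (fun i => F (s i)) l (𝓝 (g : X → X)) →
      Tendsto (fun i => F' (s i)) l (𝓝 g) := by
    intro ι l s g hg
    rw [IsEmbedding.subtypeVal.tendsto_nhds_iff]
    exact hg
  have htend : ∀ {ι : Type} (l : Filter ι) (s t : ι → ℤ) (g h : G),
      Tendsto (fun i => F (s i)) l (𝓝 (g : X → X)) →
      Tendsto (fun i => F (t i)) l (𝓝 (h : X → X)) →
      Tendsto (fun i => F (s i) ∘ F (t i)) l (𝓝 ((g : X → X) ∘ (h : X → X))) := by
    intro ι l s t g h hs ht
    have h1 : Tendsto (fun i => (F' (s i), F' (t i))) l (𝓝 (g, h)) :=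
      (hFG hs).prodMk_nhds (hFG ht)
    exact (hcompc.continuousAt (x := (g, h))).tendsto.comp h1
  -- closure under composition
  have hmul_mem : ∀ g h : G, (g : X → X) ∘ (h : X → X) ∈ T := by
    rintro ⟨g, hg⟩ ⟨h, hh⟩
    obtain ⟨u, hu⟩ := hkey g hg
    obtain ⟨v, hv⟩ := hkey h hh
    have htt : Tendsto (fun p : ℤ × ℤ => F p.1 ∘ F p.2)
        ((↑u ×ˢ ↑v : Filter (ℤ × ℤ))) (𝓝 (g ∘ h)) :=
      htend _ Prod.fst Prod.snd ⟨g, hg⟩ ⟨h, hh⟩ (hu.comp tendsto_fst) (hv.comp tendsto_snd)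
    exact mem_closure_of_tendsto htt (Eventually.of_forall fun p => by
      rw [← hFadd]; exact ⟨p.1 + p.2, rfl⟩)
  -- commutativity
  have hcomm : ∀ g h : G, (g : X → X) ∘ (h : X → X) = (h : X → X) ∘ (g : X → X) := by
    rintro ⟨g, hg⟩ ⟨h, hh⟩
    obtain ⟨u, hu⟩ := hkey g hg
    obtain ⟨v, hv⟩ := hkey h hh
    have htt1 : Tendsto (fun p : ℤ × ℤ => F p.1 ∘ F p.2)
        ((↑u ×ˢ ↑v : Filter (ℤ × ℤ))) (𝓝 (g ∘ h)) :=
      htend _ Prod.fst Prod.snd ⟨g, hg⟩ ⟨h, hh⟩ (hu.comp tendsto_fst) (hv.comp tendsto_snd)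
    have htt2 : Tendsto (fun p : ℤ × ℤ => F p.2 ∘ F p.1)
        ((↑u ×ˢ ↑v : Filter (ℤ × ℤ))) (𝓝 (h ∘ g)) :=
      htend _ Prod.snd Prod.fst ⟨h, hh⟩ ⟨g, hg⟩ (hv.comp tendsto_snd) (hu.comp tendsto_fst)
    have heqf : (fun p : ℤ × ℤ => F p.1 ∘ F p.2) = fun p : ℤ × ℤ => F p.2 ∘ F p.1 := by
      funext p; rw [← hFadd, ← hFadd, add_comm]
    rw [heqf] at htt1
    exact tendsto_nhds_unique htt1 htt2
  -- inverses
  have hinv : ∀ g : G, ∃ h : G,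
      (h : X → X) ∘ (g : X → X) = id ∧ (g : X → X) ∘ (h : X → X) = id := by
    rintro ⟨g, hg⟩
    obtain ⟨u, hu⟩ := hkey g hg
    have hmem' : ↑(u.map fun n => F (-n)) ≤ Filter.principal T := by
      rw [Ultrafilter.coe_map, Filter.le_principal_iff, Filter.mem_map]
      exact Filter.univ_mem' fun n => hmemF (-n)
    obtain ⟨h, hhT, hh⟩ := hTcompact.ultrafilter_le_nhds (u.map fun n => F (-n)) hmem'
    have hhv : Tendsto (fun n => F (-n)) (↑u) (𝓝 h) := by
      rw [Ultrafilter.coe_map] at hh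
      exact hh
    have htt1 : Tendsto (fun n : ℤ => F (-n) ∘ F n) (↑u) (𝓝 (h ∘ g)) :=
      htend ↑u (fun n => -n) (fun n => n) ⟨h, hhT⟩ ⟨g, hg⟩ hhv hu
    have htt2 : Tendsto (fun n : ℤ => F n ∘ F (-n)) (↑u) (𝓝 (g ∘ h)) :=
      htend ↑u (fun n => n) (fun n => -n) ⟨g, hg⟩ ⟨h, hhT⟩ hu hhv
    have hid1 : (fun n : ℤ => F (-n) ∘ F n) = fun _ : ℤ => id := by
      funext n; rw [← hFadd, neg_add_cancel, hF0]
    have hid2 : (fun n : ℤ => F n ∘ F (-n)) = fun _ : ℤ => id := by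
      funext n; rw [← hFadd, add_neg_cancel, hF0]
    rw [hid1] at htt1
    rw [hid2] at htt2
    exact ⟨⟨h, hhT⟩, tendsto_nhds_unique htt1 tendsto_const_nhds,
      tendsto_nhds_unique htt2 tendsto_const_nhds⟩
  -- the group structure
  letI : CommGroup G :=
    { mul := fun g h => ⟨(g : X → X) ∘ (h : X → X), hmul_mem g h⟩
      one := ⟨id, hF0 ▸ hmemF 0⟩
      inv := fun g => (hinv g).choose
      mul_assoc := fun a b c => Subtype.ext rfl
      one_mul := fun a => Subtype.ext (Function.id_comp _)
      mul_one := fun a => Subtype.ext (Function.comp_id _)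
      inv_mul_cancel := fun a => Subtype.ext (hinv a).choose_spec.1
      mul_comm := fun a b => Subtype.ext (hcomm a b) }
  have hmulc : Continuous fun p : G × G => p.1 * p.2 := hcompc.subtype_mk _
  haveI : IsTopologicalGroup G :=
    { continuous_mul := hmulc
      continuous_inv := by
        rw [continuous_iff_isClosed]
        intro C hC
        have hset : (fun g : G => g⁻¹) ⁻¹' C =
            Prod.fst '' {p : G × G | p.1 * p.2 = 1 ∧ p.2 ∈ C} := by
          ext g
          constructor
          · intro hgC
            exact ⟨(g, g⁻¹), ⟨mul_inv_cancel g, hgC⟩, rfl⟩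
          · rintro ⟨⟨a, b⟩, ⟨hab, hbC⟩, rfl⟩
            have : a⁻¹ = b := inv_eq_of_mul_eq_one_right hab
            simpa [Set.mem_preimage, this] using hbC
        rw [hset]
        have hcl : IsClosed {p : G × G | p.1 * p.2 = 1 ∧ p.2 ∈ C} :=
          ((isClosed_singleton.preimage hmulc).inter (hC.preimage continuous_snd))
        exact (hcl.isCompact.image continuous_fst).isClosed }
  -- the evaluation homeomorphism
  set e : G → X := fun g => (g : X → X) x₀ with he
  have hecont : Continuous e := (continuous_apply x₀).comp continuous_subtype_val
  have horb : ∀ (g : G) (n : ℤ), (g : X → X) (F n x₀) = F n (e g) := by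
    intro g n
    have := congrFun (hcomm g (F' n)) x₀
    simpa using this
  have hinj : Function.Injective e := by
    intro g h hgh
    apply Subtype.ext
    refine Continuous.ext_on hx₀ (hTcont _ g.2) (hTcont _ h.2) ?_
    rintro _ ⟨n, rfl⟩
    show (g : X → X) (F n x₀) = (h : X → X) (F n x₀)
    rw [horb, horb, hgh]
  have hsurj : Function.Surjective e := by
    have hcr : IsClosed (Set.range e) := (isCompact_range hecont).isClosed
    have hdr : Dense (Set.range e) := by
      refine Dense.mono ?_ hx₀
      rintro _ ⟨n, rfl⟩
      exact ⟨F' n, rfl⟩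
    rw [← Set.range_eq_univ]
    rw [← hcr.closure_eq]
    exact hdr.closure_eq
  have hbij : Function.Bijective e := ⟨hinj, hsurj⟩
  let homeo : G ≃ₜ X :=
    Continuous.homeoOfEquivCompactToT2 (f := Equiv.ofBijective e hbij) hecont
  have hconjG : ∀ x : X, homeo.symm (f x) = F' 1 * homeo.symm x := by
    intro x
    apply homeo.injective
    rw [homeo.apply_symm_apply]
    symm
    show e (F' 1 * homeo.symm x) = f x
    have hx : e (homeo.symm x) = x := homeo.apply_symm_apply x
    show (F 1) (e (homeo.symm x)) = f x
    rw [hx, hF1]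
  -- shrink everything into the right universe
  haveI : Nonempty X := ⟨x₀⟩
  obtain ⟨useq, hus⟩ := TopologicalSpace.exists_dense_seq X
  have hφ : Function.Injective (fun x : X => fun n : ℕ => dist x (useq n)) := by
    intro x y hxy
    have h' : ∀ n, dist x (useq n) = dist y (useq n) := fun n => congrFun hxy n
    by_contra hne
    have hpos : 0 < dist x y := dist_pos.mpr hne
    obtain ⟨n, hn⟩ := Metric.denseRange_iff.mp hus x (dist x y / 2) (by linarith)
    have htri : dist x y ≤ dist x (useq n) + dist (useq n) y := dist_triangle _ _ _
    rw [dist_comm (useq n) y, ← h' n] at htri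
    linarith
  haveI hsmall : Small.{0} X := small_of_injective hφ
  let β := ULift (Shrink.{0} X)
  let eXβ : X ≃ β := (equivShrink.{0} X).trans Equiv.ulift.symm
  let eβG : β ≃ G := eXβ.symm.trans homeo.symm.toEquiv
  letI : TopologicalSpace β := TopologicalSpace.induced eβG inferInstance
  have hind : IsInducing eβG := ⟨rfl⟩
  let hβG : β ≃ₜ G := eβG.toHomeomorphOfIsInducing hind
  letI : CommGroup β := eβG.commGroup
  haveI : CompactSpace β := hβG.symm.compactSpace
  haveI : IsTopologicalGroup β :=
    { continuous_mul := by
        show Continuous fun p : β × β => eβG.symm (eβG p.1 * eβG p.2)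
        exact hβG.symm.continuous.comp (hmulc.comp
          ((hβG.continuous.comp continuous_fst).prodMk (hβG.continuous.comp continuous_snd)))
      continuous_inv := by
        show Continuous fun b : β => eβG.symm (eβG b)⁻¹
        exact hβG.symm.continuous.comp (continuous_inv.comp hβG.continuous) }
  refine ⟨{ G := β, g := eβG.symm (F' 1), h := homeo.symm.trans hβG.symm, conj := ?_ }⟩
  intro x
  show hβG.symm (homeo.symm (f x)) = eβG.symm (F' 1) * hβG.symm (homeo.symm x)
  rw [hconjG x]
  show eβG.symm (F' 1 * homeo.symm x) =
    eβG.symm (eβG (eβG.symm (F' 1)) * eβG (eβG.symm (homeo.symm x)))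
  rw [Equiv.apply_symm_apply, Equiv.apply_symm_apply]
end
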